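/- For every a ∈ ℕ₀, the ℝ-linear span of the set of functions {w_{k,m,2} : k ∈ N₂, ⌊2^{a−1}⌋ ≤ k < 2^a, m ∈ L_{k,2}} equals the ℝ-linear span of {wal_k : ⌊2^{a−1}⌋ ≤ k < 2^a}, as subspaces of the space of real-valued functions on [0,1). -/

import Mathlib

open scoped Classical
open MeasureTheory

open scoped Classical
open MeasureTheory

noncomputable section

/-- The binary digit `ξ_{i+1}` of `x ∈ [0,1)`. -/
def rdigit (x : ℝ) (i : ℕ) : ℕ := (⌊x * 2 ^ (i + 1)⌋).toNat % 2

/-- The `k`-th Walsh function in base `2`. -/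
def walsh (k : ℕ) (x : ℝ) : ℝ :=
  (-1 : ℝ) ^ ∑ i ∈ Finset.range (Nat.size k), (Nat.testBit k i).toNat * rdigit x i

/-- `k` is a sum of two distinct powers of two, i.e. `k ∈ N₂ ∖ N₁`. -/
def twoBit (k : ℕ) : Prop := ∃ a₁ a₂ : ℕ, a₂ < a₁ ∧ k = 2 ^ a₁ + 2 ^ a₂

/-- `k ∈ N₁`, i.e. `k = 0` or `k` is a power of two. -/
def inN1 (k : ℕ) : Prop := k = 0 ∨ ∃ a : ℕ, k = 2 ^ a

/-- `k ∈ N₂`. -/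
def inN2 (k : ℕ) : Prop := inN1 k ∨ twoBit k

/-- For `k = 2^{a₁} + 2^{a₂}` with `a₁ > a₂`, this is the smaller exponent `a₂`. -/
def lowExp (k : ℕ) : ℕ := Nat.log2 (k % 2 ^ Nat.log2 k)

/-- The index set `L_{k,2}`. -/
def L2 (k : ℕ) : Set ℕ := if twoBit k then {m | m < 2 ^ lowExp k} else {0}

/-- The order-2 localized Walsh function `w_{k,m,2}`. -/
def w2 (k m : ℕ) (x : ℝ) : ℝ :=
  if twoBit k then
    Real.sqrt (2 ^ lowExp k) *
      Set.indicator (Set.Ico ((m : ℝ) / 2 ^ lowExp k) (((m : ℝ) + 1) / 2 ^ lowExp k))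
        (fun _ => (1:ℝ)) x *
      walsh k x
  else walsh k x

-- walsh with extended range
lemma walsh_eq {k n : ℕ} (h : k < 2 ^ n) (x : ℝ) :
    walsh k x = (-1 : ℝ) ^ ∑ i ∈ Finset.range n, (Nat.testBit k i).toNat * rdigit x i := by
  unfold walsh
  congr 1
  apply Finset.sum_subset (Finset.range_subset_range.mpr (Nat.size_le.mpr h))
  intro i _ hi
  simp only [Finset.mem_range, not_lt] at hi
  have : Nat.testBit k i = false :=
    Nat.testBit_eq_false_of_lt (lt_of_lt_of_le (Nat.lt_size_self k)
      (Nat.pow_le_pow_right (by norm_num) hi))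
  simp [this]

lemma walsh_prod {k n : ℕ} (h : k < 2 ^ n) (x : ℝ) :
    walsh k x = ∏ i ∈ Finset.range n, ((-1 : ℝ) ^ rdigit x i) ^ (Nat.testBit k i).toNat := by
  rw [walsh_eq h]
  rw [← Finset.prod_pow_eq_pow_sum]
  apply Finset.prod_congr rfl
  intro i _
  rw [mul_comm, pow_mul]

lemma toNat_testBit (m j : ℕ) : (Nat.testBit m j).toNat = m / 2 ^ j % 2 := by
  rw [Nat.testBit_eq_decide_div_mod_eq]
  rcases Nat.mod_two_eq_zero_or_one (m / 2 ^ j) with h | h <;> simp [h]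

lemma bit_add {c k l : ℕ} (hk : 2 ^ c ∣ k) (hl : l < 2 ^ c) (i : ℕ) :
    (Nat.testBit (k + l) i).toNat = (Nat.testBit k i).toNat + (Nat.testBit l i).toNat := by
  obtain ⟨q, rfl⟩ := hk
  simp only [toNat_testBit]
  rcases lt_or_ge i c with hic | hic
  · have h1 : 2 ^ c * q = 2 ^ i * (2 * (2 ^ (c - (i + 1)) * q)) := by
      rw [← mul_assoc, ← mul_assoc, ← pow_succ, ← pow_add]
      congr 2
      omega
    have hdiv : ∀ y : ℕ, (2 ^ c * q + y) / 2 ^ i = 2 * (2 ^ (c - (i + 1)) * q) + y / 2 ^ i := by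
      intro y
      rw [h1, Nat.mul_add_div (Nat.two_pow_pos i)]
    have hk0 : 2 ^ c * q / 2 ^ i % 2 = 0 := by
      have := hdiv 0
      simp only [add_zero, Nat.zero_div] at this
      omega
    rw [hdiv l, Nat.mul_add_mod, hk0, zero_add]
  · have hli : l < 2 ^ i := lt_of_lt_of_le hl (Nat.pow_le_pow_right (by norm_num) hic)
    have hdiv : (2 ^ c * q + l) / 2 ^ i = 2 ^ c * q / 2 ^ i := by
      have h2 : (2:ℕ) ^ i = 2 ^ c * 2 ^ (i - c) := by rw [← pow_add]; congr 1; omega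
      rw [h2, ← Nat.div_div_eq_div_mul, ← Nat.div_div_eq_div_mul,
        Nat.mul_add_div (Nat.two_pow_pos c),
        Nat.div_eq_of_lt hl, add_zero,
        Nat.mul_div_cancel_left _ (Nat.two_pow_pos c)]
    rw [hdiv, Nat.div_eq_of_lt hli]
    simp

lemma walsh_mul {n c k l : ℕ} (hk : 2 ^ c ∣ k) (hl : l < 2 ^ c) (hn : k + l < 2 ^ n) (x : ℝ) :
    walsh (k + l) x = walsh k x * walsh l x := by
  have hkn : k < 2 ^ n := lt_of_le_of_lt (Nat.le_add_right k l) hn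
  have hln : l < 2 ^ n := lt_of_le_of_lt (Nat.le_add_left l k) hn
  rw [walsh_eq hn, walsh_eq hkn, walsh_eq hln, ← pow_add, ← Finset.sum_add_distrib]
  congr 1
  apply Finset.sum_congr rfl
  intro i _
  rw [bit_add hk hl, add_mul]

lemma rdigit_eq_floor (x : ℝ) (hx : 0 ≤ x) (i : ℕ) :
    rdigit x i = ⌊x * 2 ^ (i + 1)⌋₊ % 2 := by
  unfold rdigit
  rw [Int.floor_toNat]

lemma natFloor_div_pow (x : ℝ) (hx : 0 ≤ x) {i c : ℕ} (hi : i < c) :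
    ⌊x * 2 ^ (i + 1)⌋₊ = ⌊x * 2 ^ c⌋₊ / 2 ^ (c - (i + 1)) := by
  rw [← Nat.floor_div_natCast]
  congr 1
  rw [eq_div_iff (by positivity), mul_assoc]
  have h1 : ((2 ^ (c - (i + 1)) : ℕ) : ℝ) = 2 ^ (c - (i + 1)) := by push_cast; ring
  rw [h1, ← pow_add]
  have h2 : i + 1 + (c - (i + 1)) = c := by omega
  rw [h2]

lemma rdigit_of_floor (x : ℝ) (hx : 0 ≤ x) {i c : ℕ} (hi : i < c) :
    rdigit x i = (Nat.testBit ⌊x * 2 ^ c⌋₊ (c - 1 - i)).toNat := by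
  rw [rdigit_eq_floor x hx, toNat_testBit, natFloor_div_pow x hx hi]
  have h1 : c - (i + 1) = c - 1 - i := by omega
  rw [h1]

/-- the coefficient `wal_l` on the interval `I(m,c)` -/
def eps (c l m : ℕ) : ℝ :=
  ∏ i ∈ Finset.range c, ((-1 : ℝ) ^ (Nat.testBit m (c - 1 - i)).toNat) ^ (Nat.testBit l i).toNat

lemma walsh_apply {c l : ℕ} (hl : l < 2 ^ c) (x : ℝ) (hx : 0 ≤ x) :
    walsh l x = eps c l ⌊x * 2 ^ c⌋₊ := by
  rw [walsh_prod hl]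
  apply Finset.prod_congr rfl
  intro i hi
  rw [rdigit_of_floor x hx (Finset.mem_range.mp hi)]

lemma sum_prod_pow (c : ℕ) (s : ℕ → ℝ) :
    ∑ l ∈ Finset.range (2 ^ c), ∏ i ∈ Finset.range c, s i ^ (Nat.testBit l i).toNat
      = ∏ i ∈ Finset.range c, (1 + s i) := by
  induction c with
  | zero => simp
  | succ c ih =>
    have hsplit : ∑ l ∈ Finset.range (2 ^ (c+1)),
        ∏ i ∈ Finset.range (c+1), s i ^ (Nat.testBit l i).toNat
        = ∑ l ∈ Finset.range (2 ^ c), ∏ i ∈ Finset.range (c+1), s i ^ (Nat.testBit l i).toNat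
          + ∑ l ∈ Finset.range (2 ^ c),
              ∏ i ∈ Finset.range (c+1), s i ^ (Nat.testBit (2 ^ c + l) i).toNat := by
      have h : (2:ℕ) ^ (c+1) = 2 ^ c + 2 ^ c := by rw [pow_succ]; omega
      rw [h, Finset.sum_range_add]
    rw [hsplit]
    have e1 : ∀ l ∈ Finset.range (2 ^ c),
        ∏ i ∈ Finset.range (c+1), s i ^ (Nat.testBit l i).toNat
        = ∏ i ∈ Finset.range c, s i ^ (Nat.testBit l i).toNat := by
      intro l hl
      rw [Finset.prod_range_succ,
        Nat.testBit_eq_false_of_lt (Finset.mem_range.mp hl)]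
      simp
    have e2 : ∀ l ∈ Finset.range (2 ^ c),
        ∏ i ∈ Finset.range (c+1), s i ^ (Nat.testBit (2 ^ c + l) i).toNat
        = (∏ i ∈ Finset.range c, s i ^ (Nat.testBit l i).toNat) * s c := by
      intro l hl
      have hl' : l < 2 ^ c := Finset.mem_range.mp hl
      rw [Finset.prod_range_succ]
      congr 1
      · apply Finset.prod_congr rfl
        intro i hi
        have h2 : Nat.testBit (2 ^ c) i = false := by
          rw [Nat.testBit_two_pow]
          have := Finset.mem_range.mp hi
          simp only [decide_eq_false_iff_not]
          omega
        rw [bit_add (c := c) (k := 2 ^ c) (l := l) ⟨1, (mul_one _).symm⟩ hl' i, h2]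
        simp
      · have h2 : Nat.testBit (2 ^ c) c = true := by
          rw [Nat.testBit_two_pow]; simp
        have h3 : Nat.testBit l c = false := Nat.testBit_eq_false_of_lt hl'
        rw [bit_add (c := c) (k := 2 ^ c) (l := l) ⟨1, (mul_one _).symm⟩ hl' c, h2, h3]
        simp
    rw [Finset.sum_congr rfl e1, Finset.sum_congr rfl e2, ← Finset.sum_mul, ih,
      Finset.prod_range_succ]
    ring

lemma orth {c m m' : ℕ} (hm : m < 2 ^ c) (hm' : m' < 2 ^ c) :
    ∑ l ∈ Finset.range (2 ^ c), eps c l m * eps c l m'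
      = if m = m' then (2 ^ c : ℝ) else 0 := by
  have key : ∀ l, eps c l m * eps c l m'
      = ∏ i ∈ Finset.range c,
          ((-1 : ℝ) ^ (Nat.testBit m (c - 1 - i)).toNat
            * (-1 : ℝ) ^ (Nat.testBit m' (c - 1 - i)).toNat) ^ (Nat.testBit l i).toNat := by
    intro l
    unfold eps
    rw [← Finset.prod_mul_distrib]
    apply Finset.prod_congr rfl
    intro i _
    rw [mul_pow]
  simp only [key]
  rw [sum_prod_pow]
  by_cases hmm : m = m'
  · subst hmm
    rw [if_pos rfl]
    have : ∀ i ∈ Finset.range c,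
        (1 : ℝ) + (-1 : ℝ) ^ (Nat.testBit m (c - 1 - i)).toNat
          * (-1 : ℝ) ^ (Nat.testBit m (c - 1 - i)).toNat = 2 := by
      intro i _
      rcases Bool.eq_false_or_eq_true (Nat.testBit m (c - 1 - i)) with h | h <;> rw [h] <;> norm_num
    rw [Finset.prod_congr rfl this, Finset.prod_const, Finset.card_range]
  · rw [if_neg hmm]
    obtain ⟨j, hj⟩ : ∃ j, Nat.testBit m j ≠ Nat.testBit m' j := by
      by_contra hc
      push_neg at hc
      exact hmm (Nat.eq_of_testBit_eq hc)
    have hjc : j < c := by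
      by_contra hjc
      push_neg at hjc
      have h1 : Nat.testBit m j = false := Nat.testBit_eq_false_of_lt
        (lt_of_lt_of_le hm (Nat.pow_le_pow_right (by norm_num) hjc))
      have h2 : Nat.testBit m' j = false := Nat.testBit_eq_false_of_lt
        (lt_of_lt_of_le hm' (Nat.pow_le_pow_right (by norm_num) hjc))
      rw [h1, h2] at hj
      exact hj rfl
    apply Finset.prod_eq_zero (i := c - 1 - j) (Finset.mem_range.mpr (by omega))
    have hcj : c - 1 - (c - 1 - j) = j := by omega
    rw [hcj]
    rcases Bool.eq_false_or_eq_true (Nat.testBit m j) with h | h <;>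
      rcases Bool.eq_false_or_eq_true (Nat.testBit m' j) with h' | h' <;>
        rw [h, h'] <;> first
          | (exfalso; rw [h, h'] at hj; exact hj rfl)
          | norm_num

/-- indicator of the dyadic interval I(m,c) -/
def ind (c m : ℕ) (x : ℝ) : ℝ :=
  Set.indicator (Set.Ico ((m : ℝ) / 2 ^ c) (((m : ℝ) + 1) / 2 ^ c)) (fun _ => (1:ℝ)) x

lemma ind_eq (c m : ℕ) (x : ℝ) (hx : 0 ≤ x) :
    ind c m x = if m = ⌊x * 2 ^ c⌋₊ then 1 else 0 := by
  unfold ind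
  have hmem : x ∈ Set.Ico ((m : ℝ) / 2 ^ c) (((m : ℝ) + 1) / 2 ^ c) ↔ ⌊x * 2 ^ c⌋₊ = m := by
    rw [Nat.floor_eq_iff (by positivity)]
    constructor
    · rintro ⟨h1, h2⟩
      constructor
      · rwa [div_le_iff₀ (by positivity)] at h1
      · rwa [lt_div_iff₀ (by positivity)] at h2
    · rintro ⟨h1, h2⟩
      constructor
      · rwa [div_le_iff₀ (by positivity)]
      · rwa [lt_div_iff₀ (by positivity)]
  by_cases h : m = ⌊x * 2 ^ c⌋₊
  · rw [if_pos h, Set.indicator_of_mem (hmem.mpr h.symm)]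
  · rw [if_neg h, Set.indicator_of_notMem]
    intro hc
    exact h (hmem.mp hc).symm

lemma floor_lt_pow {c : ℕ} {x : ℝ} (hx : x ∈ Set.Ico (0:ℝ) 1) : ⌊x * 2 ^ c⌋₊ < 2 ^ c := by
  rw [Nat.floor_lt (mul_nonneg hx.1 (by positivity))]
  push_cast
  nlinarith [hx.2, (by positivity : (0:ℝ) < (2:ℝ) ^ c)]

/-- Walsh inversion: indicator as combination of Walsh functions -/
lemma ind_eq_sum {c m : ℕ} (hm : m < 2 ^ c) {x : ℝ} (hx : x ∈ Set.Ico (0:ℝ) 1) :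
    ind c m x = (2 ^ c : ℝ)⁻¹ * ∑ l ∈ Finset.range (2 ^ c), eps c l m * walsh l x := by
  have hsum : ∑ l ∈ Finset.range (2 ^ c), eps c l m * walsh l x
      = if m = ⌊x * 2 ^ c⌋₊ then (2 ^ c : ℝ) else 0 := by
    have : ∀ l ∈ Finset.range (2 ^ c), eps c l m * walsh l x
        = eps c l m * eps c l ⌊x * 2 ^ c⌋₊ := by
      intro l hl
      rw [walsh_apply (Finset.mem_range.mp hl) x hx.1]
    rw [Finset.sum_congr rfl this, orth hm (floor_lt_pow hx)]
  rw [hsum, ind_eq c m x hx.1]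
  by_cases h : m = ⌊x * 2 ^ c⌋₊ <;> simp [h]

/-- Walsh function as combination of indicators -/
lemma walsh_eq_sum {c l : ℕ} (hl : l < 2 ^ c) {x : ℝ} (hx : x ∈ Set.Ico (0:ℝ) 1) :
    walsh l x = ∑ m ∈ Finset.range (2 ^ c), eps c l m * ind c m x := by
  rw [walsh_apply hl x hx.1]
  rw [Finset.sum_eq_single ⌊x * 2 ^ c⌋₊]
  · rw [ind_eq c _ x hx.1, if_pos rfl, mul_one]
  · intro m _ hm
    rw [ind_eq c m x hx.1, if_neg hm, mul_zero]
  · intro hmem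
    exact absurd (Finset.mem_range.mpr (floor_lt_pow hx)) hmem

lemma not_twoBit_pow (b : ℕ) : ¬ twoBit (2 ^ b) := by
  rintro ⟨a₁, a₂, hlt, heq⟩
  have h2a : (2:ℕ) ^ a₂ < 2 ^ a₁ := Nat.pow_lt_pow_right (by norm_num) hlt
  have h1 : (0:ℕ) < 2 ^ a₂ := Nat.two_pow_pos a₂
  have h0 : (0:ℕ) < 2 ^ a₁ := Nat.two_pow_pos a₁
  have hb : (0:ℕ) < 2 ^ b := Nat.two_pow_pos b
  have ha : a₁ < b := by
    have : (2:ℕ) ^ a₁ < 2 ^ b := by omega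
    exact (Nat.pow_lt_pow_iff_right (by norm_num)).mp this
  have hle : (2:ℕ) ^ (a₁ + 1) ≤ 2 ^ b := Nat.pow_le_pow_right (by norm_num) (by omega)
  have e : (2:ℕ) ^ (a₁ + 1) = 2 ^ a₁ + 2 ^ a₁ := by rw [pow_succ]; omega
  omega

lemma not_twoBit_zero : ¬ twoBit 0 := by
  rintro ⟨a₁, a₂, hlt, heq⟩
  have h1 : (0:ℕ) < 2 ^ a₂ := Nat.two_pow_pos a₂
  have h2 : (0:ℕ) < 2 ^ a₁ := Nat.two_pow_pos a₁
  omega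

lemma twoBit_in_range {k b : ℕ} (h : twoBit k) (h1 : 2 ^ b ≤ k) (h2 : k < 2 ^ (b + 1)) :
    ∃ c, c < b ∧ k = 2 ^ b + 2 ^ c := by
  obtain ⟨a₁, a₂, hlt, rfl⟩ := h
  have h2a : (2:ℕ) ^ a₂ < 2 ^ a₁ := Nat.pow_lt_pow_right (by norm_num) hlt
  have hp1 : (0:ℕ) < 2 ^ a₂ := Nat.two_pow_pos a₂
  have hp2 : (0:ℕ) < 2 ^ a₁ := Nat.two_pow_pos a₁
  have hp3 : (0:ℕ) < 2 ^ b := Nat.two_pow_pos b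
  have eb : (2:ℕ) ^ (b + 1) = 2 ^ b + 2 ^ b := by rw [pow_succ]; omega
  have ha₁b : a₁ = b := by
    by_contra hne
    rcases lt_or_gt_of_ne hne with hlt' | hgt
    · have hle : (2:ℕ) ^ (a₁ + 1) ≤ 2 ^ b := Nat.pow_le_pow_right (by norm_num) (by omega)
      have e : (2:ℕ) ^ (a₁ + 1) = 2 ^ a₁ + 2 ^ a₁ := by rw [pow_succ]; omega
      omega
    · have hle : (2:ℕ) ^ (b + 1) ≤ 2 ^ a₁ := Nat.pow_le_pow_right (by norm_num) (by omega)
      omega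
  exact ⟨a₂, ha₁b ▸ hlt, by rw [ha₁b]⟩

lemma lowExp_eq {b c : ℕ} (h : c < b) : lowExp (2 ^ b + 2 ^ c) = c := by
  unfold lowExp
  have h2a : (2:ℕ) ^ c < 2 ^ b := Nat.pow_lt_pow_right (by norm_num) h
  have hp3 : (0:ℕ) < 2 ^ c := Nat.two_pow_pos c
  have hb : Nat.log2 (2 ^ b + 2 ^ c) = b := by
    rw [Nat.log2_eq_log_two]
    apply Nat.log_eq_of_pow_le_of_lt_pow (by omega)
    have e : (2:ℕ) ^ (b + 1) = 2 ^ b + 2 ^ b := by rw [pow_succ]; omega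
    omega
  rw [hb, Nat.add_mod_left, Nat.mod_eq_of_lt h2a, Nat.log2_eq_log_two,
    Nat.log_pow (by norm_num)]

lemma w2_of_not_twoBit {k : ℕ} (h : ¬ twoBit k) (m : ℕ) : w2 k m = walsh k := by
  unfold w2
  simp only [if_neg h]

lemma mem_L2_of_not_twoBit {k : ℕ} (h : ¬ twoBit k) : 0 ∈ L2 k := by
  unfold L2
  rw [if_neg h]
  rfl

lemma w2_twoBit {b c : ℕ} (hcb : c < b) (htb : twoBit (2 ^ b + 2 ^ c)) (m : ℕ) (x : ℝ) :
    w2 (2 ^ b + 2 ^ c) m x = Real.sqrt ((2:ℝ) ^ c) * ind c m x * walsh (2 ^ b + 2 ^ c) x := by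
  unfold w2 ind
  rw [if_pos htb, lowExp_eq hcb]

lemma walsh_mul_bc {b c l : ℕ} (hcb : c < b) (hl : l < 2 ^ c) (x : ℝ) :
    walsh (2 ^ b + 2 ^ c + l) x = walsh (2 ^ b + 2 ^ c) x * walsh l x := by
  have hdvd : 2 ^ c ∣ 2 ^ b + 2 ^ c :=
    dvd_add (pow_dvd_pow 2 (le_of_lt hcb)) dvd_rfl
  have hcb2 : (2:ℕ) ^ c < 2 ^ b := Nat.pow_lt_pow_right (by norm_num) hcb
  have hcc : (2:ℕ) ^ (c+1) ≤ 2 ^ b := Nat.pow_le_pow_right (by norm_num) (by omega)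
  have ec : (2:ℕ) ^ (c+1) = 2 ^ c + 2 ^ c := by rw [pow_succ]; omega
  have eb : (2:ℕ) ^ (b+1) = 2 ^ b + 2 ^ b := by rw [pow_succ]; omega
  have hp : (0:ℕ) < 2 ^ c := Nat.two_pow_pos c
  exact walsh_mul (n := b + 1) hdvd hl (by omega) x

theorem stmt3 (a : ℕ) :
    Submodule.span ℝ
        {g : ↥(Set.Ico (0:ℝ) 1) → ℝ |
          ∃ k m : ℕ, inN2 k ∧ 2 ^ a / 2 ≤ k ∧ k < 2 ^ a ∧ m ∈ L2 k ∧
            g = (Set.Ico (0:ℝ) 1).restrict (w2 k m)}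
      = Submodule.span ℝ
          {g : ↥(Set.Ico (0:ℝ) 1) → ℝ |
            ∃ k : ℕ, 2 ^ a / 2 ≤ k ∧ k < 2 ^ a ∧
              g = (Set.Ico (0:ℝ) 1).restrict (walsh k)} := by
  rcases Nat.eq_zero_or_pos a with rfl | ha
  · -- a = 0 : both sets reduce to {restrict (walsh 0)}
    congr 1
    ext g
    simp only [Set.mem_setOf_eq, pow_zero]
    constructor
    · rintro ⟨k, m, _, _, hk1, _, rfl⟩
      have hk0 : k = 0 := by omega
      subst hk0
      exact ⟨0, by omega, by omega, by rw [w2_of_not_twoBit not_twoBit_zero]⟩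
    · rintro ⟨k, _, hk1, rfl⟩
      have hk0 : k = 0 := by omega
      subst hk0
      exact ⟨0, 0, Or.inl (Or.inl rfl), by omega, by omega,
        mem_L2_of_not_twoBit not_twoBit_zero,
        by rw [w2_of_not_twoBit not_twoBit_zero]⟩
  · obtain ⟨b, rfl⟩ : ∃ b, a = b + 1 := ⟨a - 1, by omega⟩
    have hdiv : 2 ^ (b + 1) / 2 = 2 ^ b := by rw [pow_succ]; omega
    simp only [hdiv]
    apply le_antisymm
    · rw [Submodule.span_le]
      rintro g ⟨k, m, hN2, hk1, hk2, hm, rfl⟩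
      by_cases htb : twoBit k
      · obtain ⟨c, hcb, rfl⟩ := twoBit_in_range htb hk1 hk2
        have hm' : m < 2 ^ c := by
          unfold L2 at hm
          rw [if_pos htb, lowExp_eq hcb] at hm
          exact hm
        have key : (Set.Ico (0:ℝ) 1).restrict (w2 (2 ^ b + 2 ^ c) m)
            = ∑ l ∈ Finset.range (2 ^ c),
                (Real.sqrt ((2:ℝ) ^ c) * ((2:ℝ) ^ c)⁻¹ * eps c l m) •
                  (Set.Ico (0:ℝ) 1).restrict (walsh (2 ^ b + 2 ^ c + l)) := by
          funext x
          obtain ⟨x, hx⟩ := x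
          simp only [Set.restrict_apply, Finset.sum_apply, Pi.smul_apply, smul_eq_mul]
          simp only [Set.restrict, Set.domRestrict_apply]
          rw [w2_twoBit hcb htb, ind_eq_sum hm' hx]
          simp only [Finset.mul_sum, Finset.sum_mul]
          apply Finset.sum_congr rfl
          intro l hl
          rw [walsh_mul_bc hcb (Finset.mem_range.mp hl)]
          ring
        rw [key]
        apply Submodule.sum_mem
        intro l hl
        have hl' : l < 2 ^ c := Finset.mem_range.mp hl
        apply Submodule.smul_mem
        apply Submodule.subset_span
        refine ⟨2 ^ b + 2 ^ c + l, by omega, ?_, rfl⟩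
        have hcb2 : (2:ℕ) ^ c < 2 ^ b := Nat.pow_lt_pow_right (by norm_num) hcb
        have hcc : (2:ℕ) ^ (c+1) ≤ 2 ^ b := Nat.pow_le_pow_right (by norm_num) (by omega)
        have ec : (2:ℕ) ^ (c+1) = 2 ^ c + 2 ^ c := by rw [pow_succ]; omega
        have eb : (2:ℕ) ^ (b+1) = 2 ^ b + 2 ^ b := by rw [pow_succ]; omega
        omega
      · apply Submodule.subset_span
        exact ⟨k, hk1, hk2, by rw [w2_of_not_twoBit htb]⟩
    · rw [Submodule.span_le]
      rintro g ⟨j, hj1, hj2, rfl⟩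
      by_cases hjb : j = 2 ^ b
      · subst hjb
        apply Submodule.subset_span
        exact ⟨2 ^ b, 0, Or.inl (Or.inr ⟨b, rfl⟩), le_refl _, hj2,
          mem_L2_of_not_twoBit (not_twoBit_pow b),
          by rw [w2_of_not_twoBit (not_twoBit_pow b)]⟩
      · have eb : (2:ℕ) ^ (b+1) = 2 ^ b + 2 ^ b := by rw [pow_succ]; omega
        set r := j - 2 ^ b with hrdef
        have hr0 : r ≠ 0 := by omega
        have hrb : r < 2 ^ b := by omega
        set c := Nat.log2 r with hcdef
        have hc1 : 2 ^ c ≤ r := Nat.log2_self_le hr0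
        have hc2 : r < 2 ^ (c + 1) := Nat.lt_log2_self
        have ec : (2:ℕ) ^ (c+1) = 2 ^ c + 2 ^ c := by rw [pow_succ]; omega
        have hcb : c < b := by
          have : (2:ℕ) ^ c < 2 ^ b := by omega
          exact (Nat.pow_lt_pow_iff_right (by norm_num)).mp this
        set l := r - 2 ^ c with hldef
        have hl : l < 2 ^ c := by omega
        have hj : j = 2 ^ b + 2 ^ c + l := by omega
        have htb : twoBit (2 ^ b + 2 ^ c) := ⟨b, c, hcb, rfl⟩
        have hs0 : Real.sqrt ((2:ℝ) ^ c) ≠ 0 :=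
          ne_of_gt (Real.sqrt_pos.mpr (by positivity))
        have key : (Set.Ico (0:ℝ) 1).restrict (walsh j)
            = ∑ m ∈ Finset.range (2 ^ c),
                (eps c l m * (Real.sqrt ((2:ℝ) ^ c))⁻¹) •
                  (Set.Ico (0:ℝ) 1).restrict (w2 (2 ^ b + 2 ^ c) m) := by
          funext x
          obtain ⟨x, hx⟩ := x
          simp only [Set.restrict_apply, Finset.sum_apply, Pi.smul_apply, smul_eq_mul]
          simp only [Set.restrict, Set.domRestrict_apply]
          rw [hj, walsh_mul_bc hcb hl, walsh_eq_sum hl hx]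
          simp only [Finset.mul_sum, Finset.sum_mul]
          apply Finset.sum_congr rfl
          intro m hm
          rw [w2_twoBit hcb htb]
          field_simp
        rw [key]
        apply Submodule.sum_mem
        intro m hm
        have hm' : m < 2 ^ c := Finset.mem_range.mp hm
        apply Submodule.smul_mem
        apply Submodule.subset_span
        have hcb2 : (2:ℕ) ^ c < 2 ^ b := Nat.pow_lt_pow_right (by norm_num) hcb
        refine ⟨2 ^ b + 2 ^ c, m, Or.inr htb, by omega, by omega, ?_, rfl⟩
        unfold L2
        rw [if_pos htb, lowExp_eq hcb]
        exact hm'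

end
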